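/- If S is the Seidel matrix of a graph on n vertices (S = J - I - 2A where A is the adjacency matrix), then the rank of S is at least n - 1. -/

import Mathlib

open Matrix

/-- The Seidel matrix of a simple graph: `S = J - I - 2A`. -/
def seidelMatrix {n : ℕ} (G : SimpleGraph (Fin n)) [DecidableRel G.Adj] :
    Matrix (Fin n) (Fin n) ℤ :=
  Matrix.of fun i j => if i = j then 0 else if G.Adj i j then -1 else 1

lemma seidel_aux_map {m : ℕ} (C : Matrix (Fin m) (Fin m) ℤ)
    (hd : ∀ i, C i i = 0) (ho : ∀ i j, i ≠ j → C i j = 1 ∨ C i j = -1) :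
    C.map (Int.cast : ℤ → ZMod 2) =
      1 + Matrix.replicateCol Unit (fun _ => (1 : ZMod 2)) * Matrix.replicateRow Unit (fun _ => (1 : ZMod 2)) := by
  ext i j
  have hcr : (Matrix.replicateCol Unit (fun _ => (1 : ZMod 2)) *
      Matrix.replicateRow Unit (fun _ => (1 : ZMod 2))) i j = 1 := by
    simp [Matrix.mul_apply, Matrix.replicateCol, Matrix.replicateRow]
  by_cases h : i = j
  · subst h
    simp [Matrix.map_apply, hd i, Matrix.one_apply_eq, hcr]
    decide
  · rcases ho i j h with h1 | h1 <;>
      simp [Matrix.map_apply, h1, Matrix.one_apply_ne h, hcr]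

lemma seidel_aux_det_ne_zero {m : ℕ} (hm : Even m) (C : Matrix (Fin m) (Fin m) ℤ)
    (hd : ∀ i, C i i = 0) (ho : ∀ i j, i ≠ j → C i j = 1 ∨ C i j = -1) :
    C.det ≠ 0 := by
  intro h
  have hmap : ((Int.castRingHom (ZMod 2)) C.det : ZMod 2) =
      (C.map (Int.cast : ℤ → ZMod 2)).det := RingHom.map_det _ _
  rw [seidel_aux_map C hd ho, Matrix.det_one_add_replicateCol_mul_replicateRow] at hmap
  have : (fun _ : Fin m => (1 : ZMod 2)) ⬝ᵥ (fun _ : Fin m => (1 : ZMod 2)) = (m : ZMod 2) := by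
    simp [dotProduct]
  rw [this, h] at hmap
  have hm2 : (m : ZMod 2) = 0 :=
    (ZMod.natCast_eq_zero_iff m 2).mpr hm.two_dvd
  rw [hm2, add_zero] at hmap
  simp at hmap

lemma rank_eq_of_det_ne_zero {m : ℕ} (A : Matrix (Fin m) (Fin m) ℤ) (h : A.det ≠ 0) :
    A.rank = m := by
  have hinj : Function.Injective A.mulVecLin := by
    rw [← LinearMap.ker_eq_bot]
    exact LinearMap.ker_eq_bot'.mpr fun v hv => Matrix.eq_zero_of_mulVec_eq_zero h hv
  rw [Matrix.rank, LinearMap.finrank_range_of_inj hinj]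
  simp

theorem seidel_rank_ge {n : ℕ} (G : SimpleGraph (Fin n)) [DecidableRel G.Adj] :
    n - 1 ≤ (seidelMatrix G).rank := by
  set S := seidelMatrix G with hS
  have hdiag : ∀ i, S i i = 0 := fun i => by simp [hS, seidelMatrix]
  have hoff : ∀ i j, i ≠ j → S i j = 1 ∨ S i j = -1 := by
    intro i j h
    by_cases hadj : G.Adj i j <;> simp [hS, seidelMatrix, h, hadj]
  rcases Nat.even_or_odd n with hn | hn
  · -- n even: S itself has nonzero determinant
    have := rank_eq_of_det_ne_zero S (seidel_aux_det_ne_zero hn S hdiag hoff)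
    omega
  · -- n odd
    rcases n with _ | m
    · simp
    · -- n = m + 1, m even
      have hm : Even m := by
        rcases hn with ⟨k, hk⟩
        exact ⟨k, by omega⟩
      set B := S.submatrix (Fin.castSucc : Fin m → Fin (m + 1)) Fin.castSucc with hB
      have hBd : ∀ i, B i i = 0 := fun i => hdiag _
      have hBo : ∀ i j, i ≠ j → B i j = 1 ∨ B i j = -1 := by
        intro i j h
        exact hoff _ _ (fun hc => h (Fin.castSucc_injective m hc))
      have hBrank : B.rank = m :=
        rank_eq_of_det_ne_zero B (seidel_aux_det_ne_zero hm B hBd hBo)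
      have hle : B.rank ≤ S.rank := by
        have h1 : ((1 : Matrix (Fin (m + 1)) (Fin (m + 1)) ℤ).submatrix
            (Fin.castSucc : Fin m → Fin (m + 1)) (Equiv.refl (Fin (m + 1)))) * S =
            S.submatrix Fin.castSucc id := by
          rw [Matrix.one_submatrix_mul]
          rfl
        have h2 : (S.submatrix (Fin.castSucc : Fin m → Fin (m + 1)) id) *
            ((1 : Matrix (Fin (m + 1)) (Fin (m + 1)) ℤ).submatrix (Equiv.refl (Fin (m + 1)))
              (Fin.castSucc : Fin m → Fin (m + 1))) = B := by
          rw [Matrix.mul_submatrix_one]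
          rfl
        calc B.rank = ((S.submatrix (Fin.castSucc : Fin m → Fin (m + 1)) id) *
              ((1 : Matrix (Fin (m + 1)) (Fin (m + 1)) ℤ).submatrix (Equiv.refl (Fin (m + 1)))
                Fin.castSucc)).rank := by rw [h2]
          _ ≤ (S.submatrix (Fin.castSucc : Fin m → Fin (m + 1)) id).rank :=
              Matrix.rank_mul_le_left _ _
          _ = (((1 : Matrix (Fin (m + 1)) (Fin (m + 1)) ℤ).submatrix
              (Fin.castSucc : Fin m → Fin (m + 1)) (Equiv.refl (Fin (m + 1)))) * S).rank := by
              rw [h1]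
          _ ≤ S.rank := Matrix.rank_mul_le_right _ _
      omega
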